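/- arXiv:2307.02086 — 3 statements merged into one kernel-verified Lean document; each statement's English description precedes it below -/
import Mathlib

section
/- Let x = (x_1,x_2), y = (y_1,y_2), z = (z_1,z_2) ∈ [0,∞)² satisfy min{x_j, y_j, z_j} = 0 for j = 1, 2. Then |det C(x,y,z)| ≤ max{x_1,y_1,z_1} · max{x_2,y_2,z_2}, where C(x,y,z) is the 3×3 matrix with columns (1,x_1,x_2)^T, (1,y_1,y_2)^T, (1,z_1,z_2)^T. -/
open Matrix

/-- The 3×3 matrix with columns `(1,x₁,x₂)ᵀ, (1,y₁,y₂)ᵀ, (1,z₁,z₂)ᵀ`. -/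
noncomputable def matC (x y z : ℝ × ℝ) : Matrix (Fin 3) (Fin 3) ℝ :=
  !![1, 1, 1; x.1, y.1, z.1; x.2, y.2, z.2]

set_option maxHeartbeats 2000000 in
/-- If `x, y, z ∈ [0,∞)²` with `min{x_j,y_j,z_j} = 0` for `j = 1,2`, then
`|det C(x,y,z)| ≤ max{x₁,y₁,z₁} · max{x₂,y₂,z₂}`. -/
theorem stmt11 (x y z : ℝ × ℝ)
    (hx : 0 ≤ x.1 ∧ 0 ≤ x.2) (hy : 0 ≤ y.1 ∧ 0 ≤ y.2) (hz : 0 ≤ z.1 ∧ 0 ≤ z.2)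
    (hmin1 : min x.1 (min y.1 z.1) = 0) (hmin2 : min x.2 (min y.2 z.2) = 0) :
    |(matC x y z).det| ≤ max x.1 (max y.1 z.1) * max x.2 (max y.2 z.2) := by
  obtain ⟨a, d⟩ := x
  obtain ⟨b, e⟩ := y
  obtain ⟨c, f⟩ := z
  obtain ⟨ha, hd⟩ := hx
  obtain ⟨hb, he⟩ := hy
  obtain ⟨hc, hf⟩ := hz
  simp only [matC] at *
  rw [Matrix.det_fin_three]
  norm_num [Matrix.cons_val_zero, Matrix.cons_val_one, Matrix.head_cons,
    Matrix.cons_val_two, Matrix.tail_cons]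
  have hM1a : a ≤ max a (max b c) := le_max_left _ _
  have hM1b : b ≤ max a (max b c) := le_trans (le_max_left _ _) (le_max_right _ _)
  have hM1c : c ≤ max a (max b c) := le_trans (le_max_right _ _) (le_max_right _ _)
  have hM2d : d ≤ max d (max e f) := le_max_left _ _
  have hM2e : e ≤ max d (max e f) := le_trans (le_max_left _ _) (le_max_right _ _)
  have hM2f : f ≤ max d (max e f) := le_trans (le_max_right _ _) (le_max_right _ _)
  have h1 : a = 0 ∨ b = 0 ∨ c = 0 := by
    rcases le_total a (min b c) with h | h
    · left; rw [min_eq_left h] at hmin1; exact hmin1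
    · rw [min_eq_right h] at hmin1
      rcases le_total b c with h' | h'
      · right; left; rw [min_eq_left h'] at hmin1; exact hmin1
      · right; right; rw [min_eq_right h'] at hmin1; exact hmin1
  have h2 : d = 0 ∨ e = 0 ∨ f = 0 := by
    rcases le_total d (min e f) with h | h
    · left; rw [min_eq_left h] at hmin2; exact hmin2
    · rw [min_eq_right h] at hmin2
      rcases le_total e f with h' | h'
      · right; left; rw [min_eq_left h'] at hmin2; exact hmin2
      · right; right; rw [min_eq_right h'] at hmin2; exact hmin2
  rw [abs_le]
  rcases h1 with h1 | h1 | h1 <;> rcases h2 with h2 | h2 | h2 <;> subst h1 <;> subst h2 <;>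
    constructor <;>
    nlinarith [mul_le_mul hM1a hM2d hd (le_trans ha hM1a),
      mul_le_mul hM1a hM2e he (le_trans ha hM1a),
      mul_le_mul hM1a hM2f hf (le_trans ha hM1a),
      mul_le_mul hM1b hM2d hd (le_trans hb hM1b),
      mul_le_mul hM1b hM2e he (le_trans hb hM1b),
      mul_le_mul hM1b hM2f hf (le_trans hb hM1b),
      mul_le_mul hM1c hM2d hd (le_trans hc hM1c),
      mul_le_mul hM1c hM2e he (le_trans hc hM1c),
      mul_le_mul hM1c hM2f hf (le_trans hc hM1c),
      mul_nonneg ha hd, mul_nonneg ha he, mul_nonneg ha hf,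
      mul_nonneg hb hd, mul_nonneg hb he, mul_nonneg hb hf,
      mul_nonneg hc hd, mul_nonneg hc he, mul_nonneg hc hf]
end

section
/- Let c_1, c_2 > 0, c_j* = min{c_j, 2}, and Z = [0,c_1] × [0,c_2]. The function g_1(x,y,z) = exp(−(x_1+x_2+y_1+y_2+z_1+z_2)/2) · |det C(x,y,z)| over (x,y,z) ∈ Z³ (with C(x,y,z) the 3×3 matrix with columns (1,x_1,x_2)^T etc.) is maximized exactly at the triples whose components are {(0,0), (c_1*,0), (0,c_2*)} in some order, with maximum value exp(−(c_1*+c_2*)/2) c_1* c_2*. -/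
open Matrix Real

lemma det_le (a b c d e f P Q : ℝ) (ha : 0 ≤ a) (haP : a ≤ P) (hb : 0 ≤ b) (hbP : b ≤ P)
    (hc : 0 ≤ c) (hcP : c ≤ P) (hd : 0 ≤ d) (hdQ : d ≤ Q) (he : 0 ≤ e) (heQ : e ≤ Q)
    (hf : 0 ≤ f) (hfQ : f ≤ Q) :
    b*f - c*e - a*f + c*d + a*e - b*d ≤ P*Q := by
  have hQ : 0 ≤ Q := hd.trans hdQ
  rcases le_total a b with h1 | h1 <;> rcases le_total b c with h2 | h2 <;>
    rcases le_total a c with h3 | h3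
  · nlinarith [mul_nonneg (sub_nonneg.2 hfQ) (sub_nonneg.2 h1),
      mul_nonneg he (sub_nonneg.2 h3), mul_nonneg (sub_nonneg.2 hdQ) (sub_nonneg.2 h2),
      mul_nonneg hQ (show (0:ℝ) ≤ P - c + a by linarith)]
  · nlinarith [mul_nonneg (ha.trans haP) hQ]
  · nlinarith [mul_nonneg (sub_nonneg.2 hfQ) (sub_nonneg.2 h1),
      mul_nonneg he (sub_nonneg.2 h3), mul_nonneg hd (sub_nonneg.2 h2),
      mul_nonneg hQ (show (0:ℝ) ≤ P - b + a by linarith)]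
  · nlinarith [mul_nonneg (sub_nonneg.2 hfQ) (sub_nonneg.2 h1),
      mul_nonneg (sub_nonneg.2 heQ) (sub_nonneg.2 h3), mul_nonneg hd (sub_nonneg.2 h2),
      mul_nonneg hQ (show (0:ℝ) ≤ P - b + c by linarith)]
  · nlinarith [mul_nonneg hf (sub_nonneg.2 h1),
      mul_nonneg he (sub_nonneg.2 h3), mul_nonneg (sub_nonneg.2 hdQ) (sub_nonneg.2 h2),
      mul_nonneg hQ (show (0:ℝ) ≤ P - c + b by linarith)]
  · nlinarith [mul_nonneg hf (sub_nonneg.2 h1),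
      mul_nonneg (sub_nonneg.2 heQ) (sub_nonneg.2 h3),
      mul_nonneg (sub_nonneg.2 hdQ) (sub_nonneg.2 h2),
      mul_nonneg hQ (show (0:ℝ) ≤ P - a + b by linarith)]
  · nlinarith [mul_nonneg (ha.trans haP) hQ]
  · nlinarith [mul_nonneg hf (sub_nonneg.2 h1),
      mul_nonneg (sub_nonneg.2 heQ) (sub_nonneg.2 h3), mul_nonneg hd (sub_nonneg.2 h2),
      mul_nonneg hQ (show (0:ℝ) ≤ P - a + c by linarith)]

lemma key (c s M : ℝ) (hc : 0 < c) (hM0 : 0 ≤ M) (hMs : M ≤ s) (hMc : M ≤ c) :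
    exp (-s/2) * M ≤ exp (-(min c 2)/2) * min c 2 ∧
    (exp (-s/2) * M = exp (-(min c 2)/2) * min c 2 ↔ s = min c 2 ∧ M = min c 2) := by
  set m := min c 2 with hm
  have hm0 : 0 < m := lt_min hc two_pos
  have hm2 : m ≤ 2 := min_le_right _ _
  have hmc : m ≤ c := min_le_left _ _
  have hE : exp (-m/2) * m = exp (-s/2) * (exp ((s-m)/2) * m) := by
    rw [← mul_assoc, ← Real.exp_add]; ring_nf
  have hexp : 1 + (s-m)/2 ≤ exp ((s-m)/2) := by
    have := Real.add_one_le_exp ((s-m)/2); linarith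
  have hMm : M ≤ (1 + (s-m)/2) * m := by
    rcases min_choice c 2 with h | h
    · have hMm' : M ≤ m := by rw [← hm] at h; rw [h]; exact hMc
      nlinarith [mul_nonneg (by linarith : (0:ℝ) ≤ m - M) (by linarith : (0:ℝ) ≤ 2 - m),
        mul_nonneg hm0.le (by linarith : (0:ℝ) ≤ s - M)]
    · rw [← hm] at h; nlinarith
  have hchain : M ≤ exp ((s-m)/2) * m :=
    hMm.trans (mul_le_mul_of_nonneg_right hexp hm0.le)
  have hle : exp (-s/2) * M ≤ exp (-m/2) * m := by
    rw [hE]; exact mul_le_mul_of_nonneg_left hchain (exp_pos _).le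
  refine ⟨hle, ⟨fun h => ?_, fun ⟨h1, h2⟩ => by rw [h1, h2]⟩⟩
  · rw [hE] at h
    have hM : M = exp ((s-m)/2) * m := mul_left_cancel₀ (exp_pos (-s/2)).ne' h
    have hsm : s = m := by
      by_contra hne
      have : (s-m)/2 ≠ 0 := by intro hz; apply hne; linarith
      have hlt := Real.add_one_lt_exp this
      nlinarith [mul_lt_mul_of_pos_right hlt hm0]
    refine ⟨hsm, ?_⟩
    rw [hM, hsm]; simp

lemma pair_eq {α : Type*} (y z b c : α) (h : ({y, z} : Multiset α) = {b, c}) :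
    (y = b ∧ z = c) ∨ (y = c ∧ z = b) := by
  have h' : y ::ₘ {z} = b ::ₘ {c} := by simpa [Multiset.insert_eq_cons] using h
  rcases Multiset.cons_eq_cons.1 h' with ⟨h1, h2⟩ | ⟨hne, cs, h2, h3⟩
  · exact Or.inl ⟨h1, Multiset.singleton_inj.1 h2⟩
  · have hcard : Multiset.card cs = 0 := by
      have := congrArg Multiset.card h2; simpa using this.symm
    have hcs : cs = 0 := Multiset.card_eq_zero.1 hcard
    subst hcs
    simp only [Multiset.cons_zero] at h2 h3
    exact Or.inr ⟨(Multiset.singleton_inj.1 h3).symm, Multiset.singleton_inj.1 h2⟩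

lemma triple_eq {α : Type*} (x y z a b c : α) (h : ({x, y, z} : Multiset α) = {a, b, c}) :
    (x = a ∧ y = b ∧ z = c) ∨ (x = a ∧ y = c ∧ z = b) ∨ (x = b ∧ y = a ∧ z = c) ∨
    (x = b ∧ y = c ∧ z = a) ∨ (x = c ∧ y = a ∧ z = b) ∨ (x = c ∧ y = b ∧ z = a) := by
  have h' : x ::ₘ ({y, z} : Multiset α) = a ::ₘ {b, c} := by
    simpa [Multiset.insert_eq_cons] using h
  rcases Multiset.cons_eq_cons.1 h' with ⟨h1, h2⟩ | ⟨hne, cs, h2, h3⟩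
  · rcases pair_eq _ _ _ _ h2 with ⟨hy, hz⟩ | ⟨hy, hz⟩
    · exact Or.inl ⟨h1, hy, hz⟩
    · exact Or.inr (Or.inl ⟨h1, hy, hz⟩)
  · have hcard : Multiset.card cs = 1 := by
      have := congrArg Multiset.card h2; simp at this; omega
    obtain ⟨d, rfl⟩ := Multiset.card_eq_one.1 hcard
    have h2' : ({y, z} : Multiset α) = {a, d} := by simpa [Multiset.insert_eq_cons] using h2
    have h3' : ({b, c} : Multiset α) = {x, d} := by simpa [Multiset.insert_eq_cons] using h3
    rcases pair_eq _ _ _ _ h2' with ⟨hy, hz⟩ | ⟨hy, hz⟩ <;>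
      rcases pair_eq _ _ _ _ h3' with ⟨hb, hc⟩ | ⟨hb, hc⟩
    · exact Or.inr (Or.inr (Or.inl ⟨hb.symm, hy, hc ▸ hz⟩))
    · exact Or.inr (Or.inr (Or.inr (Or.inr (Or.inl ⟨hc.symm, hy, hb ▸ hz⟩))))
    · exact Or.inr (Or.inr (Or.inr (Or.inl ⟨hb.symm, hc ▸ hy, hz⟩)))
    · exact Or.inr (Or.inr (Or.inr (Or.inr (Or.inr ⟨hc.symm, hb ▸ hy, hz⟩))))

lemma ms3_swap12 {α : Type*} (a b c : α) : ({a, b, c} : Multiset α) = {b, a, c} := by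
  simp only [Multiset.insert_eq_cons]; exact Multiset.cons_swap a b {c}

lemma ms3_swap23 {α : Type*} (a b c : α) : ({a, b, c} : Multiset α) = {a, c, b} := by
  simp only [Multiset.insert_eq_cons]
  exact congrArg (a ::ₘ ·) (Multiset.cons_swap b c 0)

set_option maxHeartbeats 2000000 in
/-- On `Z = [0,c₁] × [0,c₂]`, the function
`g₁(x,y,z) = exp(−(x₁+x₂+y₁+y₂+z₁+z₂)/2)·|det C(x,y,z)|` is maximized exactly at the
triples whose components are `(0,0)`, `(c₁*,0)`, `(0,c₂*)` in some order (where
`c_j* = min{c_j,2}`), with maximum value `exp(−(c₁*+c₂*)/2) c₁* c₂*`. -/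
theorem stmt13 (c₁ c₂ : ℝ) (hc₁ : 0 < c₁) (hc₂ : 0 < c₂)
    (x y z : ℝ × ℝ)
    (hx : x ∈ Set.Icc 0 c₁ ×ˢ Set.Icc 0 c₂) (hy : y ∈ Set.Icc 0 c₁ ×ˢ Set.Icc 0 c₂)
    (hz : z ∈ Set.Icc 0 c₁ ×ˢ Set.Icc 0 c₂) :
    Real.exp (-(x.1 + x.2 + y.1 + y.2 + z.1 + z.2) / 2) * |(matC x y z).det|
      ≤ Real.exp (-(min c₁ 2 + min c₂ 2) / 2) * (min c₁ 2 * min c₂ 2)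
    ∧ (Real.exp (-(x.1 + x.2 + y.1 + y.2 + z.1 + z.2) / 2) * |(matC x y z).det|
        = Real.exp (-(min c₁ 2 + min c₂ 2) / 2) * (min c₁ 2 * min c₂ 2)
      ↔ ({x, y, z} : Multiset (ℝ × ℝ))
          = {((0 : ℝ), (0 : ℝ)), (min c₁ 2, 0), (0, min c₂ 2)}) := by
  simp only [Set.mem_prod, Set.mem_Icc] at hx hy hz
  obtain ⟨⟨hx10, hx11⟩, hx20, hx21⟩ := hx
  obtain ⟨⟨hy10, hy11⟩, hy20, hy21⟩ := hy
  obtain ⟨⟨hz10, hz11⟩, hz20, hz21⟩ := hz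
  set m₁ := min c₁ 2 with hm₁def
  set m₂ := min c₂ 2 with hm₂def
  have hm₁0 : 0 < m₁ := lt_min hc₁ two_pos
  have hm₂0 : 0 < m₂ := lt_min hc₂ two_pos
  set M₁ := max x.1 (max y.1 z.1) with hM₁def
  set M₂ := max x.2 (max y.2 z.2) with hM₂def
  have hxM1 : x.1 ≤ M₁ := le_max_left _ _
  have hyM1 : y.1 ≤ M₁ := le_trans (le_max_left _ _) (le_max_right _ _)
  have hzM1 : z.1 ≤ M₁ := le_trans (le_max_right _ _) (le_max_right _ _)
  have hxM2 : x.2 ≤ M₂ := le_max_left _ _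
  have hyM2 : y.2 ≤ M₂ := le_trans (le_max_left _ _) (le_max_right _ _)
  have hzM2 : z.2 ≤ M₂ := le_trans (le_max_right _ _) (le_max_right _ _)
  have hM₁0 : 0 ≤ M₁ := hx10.trans hxM1
  have hM₂0 : 0 ≤ M₂ := hx20.trans hxM2
  have hM₁c : M₁ ≤ c₁ := max_le hx11 (max_le hy11 hz11)
  have hM₂c : M₂ ≤ c₂ := max_le hx21 (max_le hy21 hz21)
  have hM₁s : M₁ ≤ x.1 + y.1 + z.1 := max_le (by linarith) (max_le (by linarith) (by linarith))
  have hM₂s : M₂ ≤ x.2 + y.2 + z.2 := max_le (by linarith) (max_le (by linarith) (by linarith))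
  have hdet : (matC x y z).det =
      y.1*z.2 - z.1*y.2 - x.1*z.2 + z.1*x.2 + x.1*y.2 - y.1*x.2 := by
    simp [matC, Matrix.det_fin_three]
  have habs : |(matC x y z).det| ≤ M₁ * M₂ := by
    rw [abs_le]
    constructor
    · have := det_le x.1 z.1 y.1 x.2 z.2 y.2 M₁ M₂ hx10 hxM1 hz10 hzM1 hy10 hyM1
        hx20 hxM2 hz20 hzM2 hy20 hyM2
      rw [hdet]; linarith
    · have := det_le x.1 y.1 z.1 x.2 y.2 z.2 M₁ M₂ hx10 hxM1 hy10 hyM1 hz10 hzM1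
        hx20 hxM2 hy20 hyM2 hz20 hzM2
      rw [hdet]; linarith
  obtain ⟨K1le, K1iff⟩ := key c₁ (x.1+y.1+z.1) M₁ hc₁ hM₁0 hM₁s hM₁c
  obtain ⟨K2le, K2iff⟩ := key c₂ (x.2+y.2+z.2) M₂ hc₂ hM₂0 hM₂s hM₂c
  rw [← hm₁def] at K1le K1iff
  rw [← hm₂def] at K2le K2iff
  have hsplit : Real.exp (-(x.1 + x.2 + y.1 + y.2 + z.1 + z.2) / 2)
      = Real.exp (-(x.1+y.1+z.1)/2) * Real.exp (-(x.2+y.2+z.2)/2) := by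
    rw [← Real.exp_add]; ring_nf
  have hRHS : Real.exp (-(m₁+m₂)/2) * (m₁*m₂)
      = (Real.exp (-m₁/2)*m₁) * (Real.exp (-m₂/2)*m₂) := by
    rw [show -(m₁+m₂)/2 = -m₁/2 + -m₂/2 by ring, Real.exp_add]; ring
  have hA0 : 0 ≤ Real.exp (-(x.1+y.1+z.1)/2) * M₁ := mul_nonneg (exp_pos _).le hM₁0
  have hB0 : 0 ≤ Real.exp (-(x.2+y.2+z.2)/2) * M₂ := mul_nonneg (exp_pos _).le hM₂0
  have hmain : Real.exp (-(x.1 + x.2 + y.1 + y.2 + z.1 + z.2) / 2) * |(matC x y z).det|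
      ≤ Real.exp (-(m₁ + m₂) / 2) * (m₁ * m₂) := by
    calc Real.exp (-(x.1 + x.2 + y.1 + y.2 + z.1 + z.2) / 2) * |(matC x y z).det|
        ≤ Real.exp (-(x.1 + x.2 + y.1 + y.2 + z.1 + z.2) / 2) * (M₁ * M₂) :=
          mul_le_mul_of_nonneg_left habs (exp_pos _).le
      _ = (Real.exp (-(x.1+y.1+z.1)/2) * M₁) * (Real.exp (-(x.2+y.2+z.2)/2) * M₂) := by
          rw [hsplit]; ring
      _ ≤ (Real.exp (-m₁/2)*m₁) * (Real.exp (-m₂/2)*m₂) :=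
          mul_le_mul K1le K2le hB0 (mul_nonneg (exp_pos _).le hm₁0.le)
      _ = Real.exp (-(m₁+m₂)/2) * (m₁*m₂) := hRHS.symm
  refine ⟨hmain, ⟨fun heq => ?_, fun hms => ?_⟩⟩
  · -- forward: equality implies the multiset characterization
    have hApos : 0 < Real.exp (-m₁/2)*m₁ := mul_pos (exp_pos _) hm₁0
    have hBpos : 0 < Real.exp (-m₂/2)*m₂ := mul_pos (exp_pos _) hm₂0
    set A := Real.exp (-(x.1+y.1+z.1)/2) * M₁ with hA
    set B := Real.exp (-(x.2+y.2+z.2)/2) * M₂ with hB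
    have hABeq : A * B = (Real.exp (-m₁/2)*m₁) * (Real.exp (-m₂/2)*m₂) := by
      have h1 : Real.exp (-(x.1 + x.2 + y.1 + y.2 + z.1 + z.2) / 2) * |(matC x y z).det|
          ≤ A * B := by
        calc Real.exp (-(x.1 + x.2 + y.1 + y.2 + z.1 + z.2) / 2) * |(matC x y z).det|
            ≤ Real.exp (-(x.1 + x.2 + y.1 + y.2 + z.1 + z.2) / 2) * (M₁ * M₂) :=
              mul_le_mul_of_nonneg_left habs (exp_pos _).le
          _ = A * B := by rw [hA, hB, hsplit]; ring
      have h2 : A * B ≤ (Real.exp (-m₁/2)*m₁) * (Real.exp (-m₂/2)*m₂) :=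
        mul_le_mul K1le K2le hB0 (mul_nonneg (exp_pos _).le hm₁0.le)
      rw [heq, hRHS] at h1
      linarith
    have hAeq : A = Real.exp (-m₁/2)*m₁ := by
      have h1 : A * B ≤ A * (Real.exp (-m₂/2)*m₂) := mul_le_mul_of_nonneg_left K2le hA0
      have h2 : A * (Real.exp (-m₂/2)*m₂) ≤ (Real.exp (-m₁/2)*m₁) * (Real.exp (-m₂/2)*m₂) :=
        mul_le_mul_of_nonneg_right K1le hBpos.le
      have h3 : A * (Real.exp (-m₂/2)*m₂) = (Real.exp (-m₁/2)*m₁) * (Real.exp (-m₂/2)*m₂) := by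
        linarith
      exact mul_right_cancel₀ hBpos.ne' h3
    have hBeq : B = Real.exp (-m₂/2)*m₂ := by
      rw [hAeq] at hABeq
      exact mul_left_cancel₀ hApos.ne' hABeq
    obtain ⟨hs1, hM1⟩ := K1iff.1 hAeq
    obtain ⟨hs2, hM2⟩ := K2iff.1 hBeq
    -- |det| = m₁ * m₂
    have hdetval : |(matC x y z).det| = m₁ * m₂ := by
      have h1 : Real.exp (-(x.1 + x.2 + y.1 + y.2 + z.1 + z.2) / 2) * |(matC x y z).det|
          = Real.exp (-(x.1 + x.2 + y.1 + y.2 + z.1 + z.2) / 2) * (m₁ * m₂) := by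
        rw [heq, hRHS, ← hAeq, ← hBeq, hA, hB, hsplit, hM1, hM2]; ring
      exact mul_left_cancel₀ (exp_pos _).ne' h1
    -- coordinate structure
    have hc1 : (x.1 = m₁ ∧ y.1 = 0 ∧ z.1 = 0) ∨ (y.1 = m₁ ∧ x.1 = 0 ∧ z.1 = 0) ∨
        (z.1 = m₁ ∧ x.1 = 0 ∧ y.1 = 0) := by
      rcases max_choice x.1 (max y.1 z.1) with h | h
      · rw [← hM₁def, hM1] at h
        exact Or.inl ⟨h.symm, by linarith, by linarith⟩
      · rw [← hM₁def, hM1] at h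
        rcases max_choice y.1 z.1 with h' | h'
        · rw [h'] at h
          exact Or.inr (Or.inl ⟨h.symm, by linarith, by linarith⟩)
        · rw [h'] at h
          exact Or.inr (Or.inr ⟨h.symm, by linarith, by linarith⟩)
    have hc2 : (x.2 = m₂ ∧ y.2 = 0 ∧ z.2 = 0) ∨ (y.2 = m₂ ∧ x.2 = 0 ∧ z.2 = 0) ∨
        (z.2 = m₂ ∧ x.2 = 0 ∧ y.2 = 0) := by
      rcases max_choice x.2 (max y.2 z.2) with h | h
      · rw [← hM₂def, hM2] at h
        exact Or.inl ⟨h.symm, by linarith, by linarith⟩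
      · rw [← hM₂def, hM2] at h
        rcases max_choice y.2 z.2 with h' | h'
        · rw [h'] at h
          exact Or.inr (Or.inl ⟨h.symm, by linarith, by linarith⟩)
        · rw [h'] at h
          exact Or.inr (Or.inr ⟨h.symm, by linarith, by linarith⟩)
    rw [hdet] at hdetval
    rcases hc1 with ⟨e1, e2, e3⟩ | ⟨e1, e2, e3⟩ | ⟨e1, e2, e3⟩ <;>
      rcases hc2 with ⟨f1, f2, f3⟩ | ⟨f1, f2, f3⟩ | ⟨f1, f2, f3⟩
    · rw [e1, e2, e3, f1, f2, f3] at hdetval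
      have h0 : (0:ℝ) < m₁ * m₂ := mul_pos hm₁0 hm₂0
      rw [← hdetval] at h0
      norm_num at h0
    · -- x = (m₁, 0), y = (0, m₂), z = (0,0)
      have hxv : x = (m₁, 0) := Prod.ext e1 f2
      have hyv : y = ((0:ℝ), m₂) := Prod.ext e2 f1
      have hzv : z = ((0:ℝ), (0:ℝ)) := Prod.ext e3 f3
      rw [hxv, hyv, hzv, ms3_swap23, ms3_swap12]
    · have hxv : x = (m₁, 0) := Prod.ext e1 f2
      have hyv : y = ((0:ℝ), (0:ℝ)) := Prod.ext e2 f3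
      have hzv : z = ((0:ℝ), m₂) := Prod.ext e3 f1
      rw [hxv, hyv, hzv, ms3_swap12]
    · have hxv : x = ((0:ℝ), m₂) := Prod.ext e2 f1
      have hyv : y = (m₁, 0) := Prod.ext e1 f2
      have hzv : z = ((0:ℝ), (0:ℝ)) := Prod.ext e3 f3
      rw [hxv, hyv, hzv, ms3_swap12, ms3_swap23, ms3_swap12]
    · rw [e1, e2, e3, f1, f2, f3] at hdetval
      have h0 : (0:ℝ) < m₁ * m₂ := mul_pos hm₁0 hm₂0
      rw [← hdetval] at h0
      norm_num at h0
    · have hxv : x = ((0:ℝ), (0:ℝ)) := Prod.ext e2 f2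
      have hyv : y = (m₁, 0) := Prod.ext e1 f3
      have hzv : z = ((0:ℝ), m₂) := Prod.ext e3 f1
      rw [hxv, hyv, hzv]
    · have hxv : x = ((0:ℝ), m₂) := Prod.ext e2 f1
      have hyv : y = ((0:ℝ), (0:ℝ)) := Prod.ext e3 f2
      have hzv : z = (m₁, 0) := Prod.ext e1 f3
      rw [hxv, hyv, hzv, ms3_swap12, ms3_swap23]
    · have hxv : x = ((0:ℝ), (0:ℝ)) := Prod.ext e2 f2
      have hyv : y = ((0:ℝ), m₂) := Prod.ext e3 f1
      have hzv : z = (m₁, 0) := Prod.ext e1 f3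
      rw [hxv, hyv, hzv, ms3_swap23]
    · rw [e1, e2, e3, f1, f2, f3] at hdetval
      have h0 : (0:ℝ) < m₁ * m₂ := mul_pos hm₁0 hm₂0
      rw [← hdetval] at h0
      norm_num at h0
  · -- reverse: multiset characterization implies equality
    rcases triple_eq _ _ _ _ _ _ hms with ⟨h1, h2, h3⟩ | ⟨h1, h2, h3⟩ | ⟨h1, h2, h3⟩ |
      ⟨h1, h2, h3⟩ | ⟨h1, h2, h3⟩ | ⟨h1, h2, h3⟩ <;>
    · rw [hdet, h1, h2, h3]
      ring_nf
      norm_num [abs_mul, abs_of_pos hm₁0, abs_of_pos hm₂0]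
      try ring_nf
      try ring
      try positivity
end

section
/- Define h(t) = e^{−t} ((1 − t/2)² + (e²/4) t²) for t ≥ 0. Then h(t) ≤ 1 for all t ≥ 0, with equality precisely at t = 0 and t = 2. Moreover, h'(t) = −((1+e²)/4) e^{−t} (t² − 2·((3+e²)/(1+e²)) t + 8/(1+e²)), whose zeros are t_1 = 4/(1+e²) and t_2 = 2, and h is decreasing on [0,t_1], increasing on [t_1, 2], and decreasing on [2,∞). -/
open Real Set

noncomputable def Hfun : ℝ → ℝ := fun t => Real.exp (-t) * ((1 - t / 2) ^ 2
  + Real.exp 1 ^ 2 / 4 * t ^ 2)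

lemma e2_gt_one : (1 : ℝ) < Real.exp 1 ^ 2 := by
  nlinarith [Real.exp_one_gt_d9]

lemma e2_pos : (0 : ℝ) < 1 + Real.exp 1 ^ 2 := by nlinarith [e2_gt_one]

lemma Hfun_hasDerivAt (t : ℝ) :
    HasDerivAt Hfun (-((1 + Real.exp 1 ^ 2) / 4) * Real.exp (-t)
      * ((t - 2) * (t - 4 / (1 + Real.exp 1 ^ 2)))) t := by
  have h1 : HasDerivAt (fun t : ℝ => Real.exp (-t)) (-Real.exp (-t)) t := by
    simpa [Function.comp_def] using (Real.hasDerivAt_exp (-t)).comp t (hasDerivAt_neg t)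
  have a : HasDerivAt (fun t : ℝ => 1 - t / 2) (-(1/2)) t := by
    simpa using ((hasDerivAt_id' t).div_const 2).const_sub (1:ℝ)
  have b : HasDerivAt (fun t : ℝ => (1 - t / 2) ^ 2) (2 * (1 - t/2) ^ 1 * (-(1/2))) t :=
    a.pow 2
  have c : HasDerivAt (fun t : ℝ => Real.exp 1 ^ 2 / 4 * t ^ 2)
      (Real.exp 1 ^ 2 / 4 * (2 * t ^ 1 * 1)) t :=
    ((hasDerivAt_id t).pow 2).const_mul _
  have h2 := b.add c
  have := h1.mul h2
  refine (this : HasDerivAt Hfun _ t).congr_deriv ?_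
  have hne : (1 + Real.exp 1 ^ 2) ≠ 0 := ne_of_gt e2_pos
  simp only [Pi.add_apply]
  field_simp
  ring

lemma Hfun_deriv (t : ℝ) :
    deriv Hfun t = -((1 + Real.exp 1 ^ 2) / 4) * Real.exp (-t)
      * ((t - 2) * (t - 4 / (1 + Real.exp 1 ^ 2))) := (Hfun_hasDerivAt t).deriv

lemma t1_lt_two : 4 / (1 + Real.exp 1 ^ 2) < 2 := by
  rw [div_lt_iff₀ e2_pos]; nlinarith [e2_gt_one]

lemma t1_pos : 0 < 4 / (1 + Real.exp 1 ^ 2) := by positivity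

lemma Hfun_cont : Continuous Hfun := by unfold Hfun; fun_prop

lemma Hfun_strictAntiOn1 : StrictAntiOn Hfun (Icc 0 (4 / (1 + Real.exp 1 ^ 2))) := by
  apply strictAntiOn_of_deriv_neg (convex_Icc _ _) Hfun_cont.continuousOn
  intro x hx
  rw [interior_Icc] at hx
  rw [Hfun_deriv]
  have h1 : x - 2 < 0 := by nlinarith [t1_lt_two, hx.2]
  have h2 : x - 4 / (1 + Real.exp 1 ^ 2) < 0 := by linarith [hx.2]
  have h3 : 0 < Real.exp (-x) := Real.exp_pos _
  rw [neg_mul, neg_mul, neg_lt_zero]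
  exact mul_pos (mul_pos (by positivity) h3) (mul_pos_of_neg_of_neg h1 h2)

lemma Hfun_strictMonoOn : StrictMonoOn Hfun (Icc (4 / (1 + Real.exp 1 ^ 2)) 2) := by
  apply strictMonoOn_of_deriv_pos (convex_Icc _ _) Hfun_cont.continuousOn
  intro x hx
  rw [interior_Icc] at hx
  rw [Hfun_deriv]
  have h1 : x - 2 < 0 := by linarith [hx.2]
  have h2 : 0 < x - 4 / (1 + Real.exp 1 ^ 2) := by linarith [hx.1]
  have h3 : 0 < Real.exp (-x) := Real.exp_pos _
  rw [neg_mul, neg_mul, neg_pos]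
  exact mul_neg_of_pos_of_neg (mul_pos (by positivity) h3) (mul_neg_of_neg_of_pos h1 h2)

lemma Hfun_strictAntiOn2 : StrictAntiOn Hfun (Ici 2) := by
  apply strictAntiOn_of_deriv_neg (convex_Ici _) Hfun_cont.continuousOn
  intro x hx
  rw [interior_Ici] at hx
  rw [Hfun_deriv]
  have h1 : 0 < x - 2 := by simpa [sub_pos] using hx
  have h2 : 0 < x - 4 / (1 + Real.exp 1 ^ 2) := by linarith [t1_lt_two]
  have h3 : 0 < Real.exp (-x) := Real.exp_pos _
  rw [neg_mul, neg_mul, neg_lt_zero]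
  exact mul_pos (mul_pos (by positivity) h3) (mul_pos h1 h2)

lemma Hfun_zero : Hfun 0 = 1 := by simp [Hfun]

lemma Hfun_two : Hfun 2 = 1 := by
  have h2 : Real.exp 1 ^ 2 = Real.exp 2 := by
    rw [← Real.exp_nat_mul]; norm_num
  have h3 : Hfun 2 = Real.exp (-2) * Real.exp 2 := by
    simp only [Hfun, h2]; ring
  rw [h3, ← Real.exp_add]; norm_num

lemma Hfun_lt_one {t : ℝ} (ht : 0 ≤ t) (h0 : t ≠ 0) (h2 : t ≠ 2) : Hfun t < 1 := by
  set t₁ := 4 / (1 + Real.exp 1 ^ 2) with ht1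
  have htp : 0 < t := lt_of_le_of_ne ht (Ne.symm h0)
  rcases le_or_gt t t₁ with hle | hgt
  · have := Hfun_strictAntiOn1 ⟨le_refl _, le_of_lt t1_pos⟩ ⟨ht, hle⟩ htp
    rwa [Hfun_zero] at this
  · rcases lt_or_gt_of_ne h2 with hlt | hgt2
    · have := Hfun_strictMonoOn ⟨le_of_lt hgt, le_of_lt hlt⟩
        ⟨le_of_lt t1_lt_two, le_refl _⟩ hlt
      rwa [Hfun_two] at this
    · have := Hfun_strictAntiOn2 (le_refl (2:ℝ)) (le_of_lt hgt2) hgt2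
      rwa [Hfun_two] at this

/-- For `h(t) = e^(−t)((1 − t/2)² + (e²/4)t²)`: `h(t) ≤ 1` for `t ≥ 0`, with
equality precisely at `t = 0` and `t = 2`; the derivative is
`h'(t) = −((1+e²)/4) e^(−t)(t² − 2((3+e²)/(1+e²))t + 8/(1+e²))`, with zeros
`t₁ = 4/(1+e²)` and `t₂ = 2`; and `h` decreases on `[0,t₁]`, increases on `[t₁,2]`, and
decreases on `[2,∞)`. -/
theorem stmt15 :
    let h : ℝ → ℝ := fun t => Real.exp (-t) * ((1 - t / 2) ^ 2
      + Real.exp 1 ^ 2 / 4 * t ^ 2)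
    let e2 : ℝ := Real.exp 1 ^ 2
    let t₁ : ℝ := 4 / (1 + e2)
    (∀ t : ℝ, 0 ≤ t → h t ≤ 1)
    ∧ (∀ t : ℝ, 0 ≤ t → (h t = 1 ↔ t = 0 ∨ t = 2))
    ∧ (∀ t : ℝ, deriv h t
        = -((1 + e2) / 4) * Real.exp (-t)
            * (t ^ 2 - 2 * ((3 + e2) / (1 + e2)) * t + 8 / (1 + e2)))
    ∧ (∀ t : ℝ, deriv h t = 0 ↔ t = t₁ ∨ t = 2)
    ∧ AntitoneOn h (Icc 0 t₁) ∧ MonotoneOn h (Icc t₁ 2) ∧ AntitoneOn h (Ici 2) := by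
  intro h e2 t₁
  have hh : h = Hfun := rfl
  have hne : (1 + Real.exp 1 ^ 2) ≠ 0 := ne_of_gt e2_pos
  have hquad : ∀ t : ℝ, (t ^ 2 - 2 * ((3 + e2) / (1 + e2)) * t + 8 / (1 + e2))
      = (t - 2) * (t - 4 / (1 + e2)) := by
    intro t
    field_simp [e2]
    ring
  refine ⟨?_, ?_, ?_, ?_, ?_, ?_, ?_⟩
  · intro t ht
    rcases eq_or_ne t 0 with rfl | h0
    · rw [hh, Hfun_zero]
    rcases eq_or_ne t 2 with rfl | h2
    · rw [hh, Hfun_two]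
    exact le_of_lt (hh ▸ Hfun_lt_one ht h0 h2)
  · intro t ht
    constructor
    · intro he
      by_contra hc
      push_neg at hc
      exact absurd he (ne_of_lt (hh ▸ Hfun_lt_one ht hc.1 hc.2))
    · rintro (rfl | rfl)
      · exact hh ▸ Hfun_zero
      · exact hh ▸ Hfun_two
  · intro t
    rw [hh, Hfun_deriv, hquad]
  · intro t
    rw [hh, Hfun_deriv]
    have hexp : Real.exp (-t) ≠ 0 := (Real.exp_pos _).ne'
    have hc : -((1 + Real.exp 1 ^ 2) / 4) ≠ 0 := by
      simp only [neg_ne_zero]; positivity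
    constructor
    · intro heq
      rcases mul_eq_zero.mp heq with hz | hz
      · rcases mul_eq_zero.mp hz with hz' | hz'
        · exact absurd hz' hc
        · exact absurd hz' hexp
      · rcases mul_eq_zero.mp hz with hz' | hz'
        · right; linarith [sub_eq_zero.mp hz']
        · left; have := sub_eq_zero.mp hz'; exact this
    · rintro (rfl | rfl)
      · have ht : t₁ = 4 / (1 + Real.exp 1 ^ 2) := rfl
        rw [ht]; ring
      · ring
  · exact hh ▸ Hfun_strictAntiOn1.antitoneOn
  · exact hh ▸ Hfun_strictMonoOn.monotoneOn
  · exact hh ▸ Hfun_strictAntiOn2.antitoneOn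
end
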